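/- arXiv:0706.2791 — 2 statements merged into one kernel-verified Lean document; each statement's English description precedes it below -/
import Mathlib

section
/- If X and Y are positive semidefinite matrices on ℂ^N ⊗ ℂ^N, then their composition X ⊙ Y := (X^R Y^R)^R is also positive semidefinite. -/
open scoped ComplexOrder

/-- Reshuffling: `(X^R)_{mn,μν} = X_{mμ,nν}`. -/
noncomputable def reshuffle {N : ℕ} (X : Matrix (Fin N × Fin N) (Fin N × Fin N) ℂ) :
    Matrix (Fin N × Fin N) (Fin N × Fin N) ℂ :=
  fun p q => X (p.1, q.1) (p.2, q.2)

/-- Composition of states: `X ⊙ Y := (X^R Y^R)^R`. -/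
noncomputable def odot {N : ℕ} (X Y : Matrix (Fin N × Fin N) (Fin N × Fin N) ℂ) :
    Matrix (Fin N × Fin N) (Fin N × Fin N) ℂ :=
  reshuffle (reshuffle X * reshuffle Y)

/-- If `X, Y ≥ 0` then `X ⊙ Y = (X^R Y^R)^R ≥ 0`. -/
theorem odot_posSemidef {N : ℕ} (X Y : Matrix (Fin N × Fin N) (Fin N × Fin N) ℂ)
    (hX : X.PosSemidef) (hY : Y.PosSemidef) : (odot X Y).PosSemidef := by
  obtain ⟨C, hC⟩ : ∃ C : Matrix (Fin N × Fin N) (Fin N × Fin N) ℂ, X = C.conjTranspose * C := by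
    open scoped MatrixOrder in exact CStarAlgebra.nonneg_iff_eq_star_mul_self.mp hX.nonneg
  obtain ⟨D, hD⟩ : ∃ D : Matrix (Fin N × Fin N) (Fin N × Fin N) ℂ, Y = D.conjTranspose * D := by
    open scoped MatrixOrder in exact CStarAlgebra.nonneg_iff_eq_star_mul_self.mp hY.nonneg
  set E : Matrix ((Fin N × Fin N) × (Fin N × Fin N)) (Fin N × Fin N) ℂ :=
    fun kl mn => ∑ a, C kl.1 (mn.1, a) * D kl.2 (a, mn.2) with hE
  have key : odot X Y = E.conjTranspose * E := by
    ext p q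
    simp only [Matrix.mul_apply, Matrix.conjTranspose_apply]
    simp only [odot, reshuffle, hC, hD, Matrix.mul_apply, Matrix.conjTranspose_apply, hE,
      star_sum, star_mul']
    simp only [Finset.sum_mul_sum]
    conv_lhs => rw [Finset.sum_comm]
    conv_lhs => enter [2, k]; rw [Finset.sum_comm]
    simp only [Fintype.sum_prod_type]
    refine Finset.sum_congr rfl fun k1 _ => Finset.sum_congr rfl fun k2 _ => ?_
    refine Finset.sum_congr rfl fun l1 _ => Finset.sum_congr rfl fun l2 _ => ?_
    refine Finset.sum_congr rfl fun a _ => Finset.sum_congr rfl fun b _ => ?_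
    ring
  rw [key]
  exact Matrix.posSemidef_conjTranspose_mul_self E
end

section
/- If σ₁ and σ₂ are Hermitian matrices on ℂ^N ⊗ ℂ^N, then σ₁ ⊙ σ₂ := (σ₁^R σ₂^R)^R is Hermitian. -/
/-- If `σ₁` and `σ₂` are Hermitian then so is `σ₁ ⊙ σ₂`. -/
theorem odot_isHermitian {N : ℕ} (σ₁ σ₂ : Matrix (Fin N × Fin N) (Fin N × Fin N) ℂ)
    (h₁ : σ₁.IsHermitian) (h₂ : σ₂.IsHermitian) : (odot σ₁ σ₂).IsHermitian := by
  rw [Matrix.IsHermitian]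
  ext ⟨i1, i2⟩ ⟨j1, j2⟩
  simp only [odot, reshuffle, Matrix.conjTranspose_apply, Matrix.mul_apply, map_sum, map_mul]
  rw [star_sum]
  exact Fintype.sum_equiv (Equiv.prodComm _ _) _ _ fun k => by
    rw [star_mul', h₁.apply, h₂.apply]; rfl
end
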